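/- Let m divide Ū_n for some n ≥ 1, where Ū is the normalized Lucas sequence with parameters √R, Q and gcd(m, Q) = 1. Then the rank of apparition ω(m) exists and ω(m) divides n. -/

import Mathlib

/-- The Lucas sequence with parameters `P = √R`, `Q` in `ℤ[√R]`. -/
def lucasU (R Q : ℤ) : ℕ → Zsqrtd R
  | 0 => 0
  | 1 => 1
  | n + 2 => Zsqrtd.sqrtd * lucasU R Q (n + 1) - (Q : Zsqrtd R) * lucasU R Q n

/-- The normalized (integer) Lucas sequence: `U n / √R` if `n` even, `U n` if `n` odd. -/
def Ubar (R Q : ℤ) (n : ℕ) : ℤ :=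
  if Even n then (lucasU R Q n).im else (lucasU R Q n).re

section aux
variable (R Q : ℤ)

lemma lucasU_add_one (a b : ℕ) :
    lucasU R Q (a + b + 1) =
      lucasU R Q (a + 1) * lucasU R Q (b + 1)
        - (Q : Zsqrtd R) * lucasU R Q a * lucasU R Q b := by
  induction b using Nat.twoStepInduction with
  | zero => simp [lucasU]
  | one =>
    rw [show lucasU R Q (a + 1 + 1) = Zsqrtd.sqrtd * lucasU R Q (a + 1)
      - (Q : Zsqrtd R) * lucasU R Q a from rfl,
      show lucasU R Q 2 = Zsqrtd.sqrtd * lucasU R Q 1 - (Q : Zsqrtd R) * lucasU R Q 0 from rfl]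
    simp [lucasU]; ring
  | more c ih1 ih2 =>
    have h1 : a + (c + 2) + 1 = (a + c + 1) + 2 := by ring
    have h2 : a + (c + 1) + 1 = (a + c + 1) + 1 := by ring
    rw [h1, show lucasU R Q ((a + c + 1) + 2) = Zsqrtd.sqrtd * lucasU R Q (a + c + 1 + 1)
      - (Q : Zsqrtd R) * lucasU R Q (a + c + 1) from rfl, ← h2, ih2, ih1]
    rw [show lucasU R Q (c + 1 + 1 + 1) = Zsqrtd.sqrtd * lucasU R Q (c + 1 + 1)
      - (Q : Zsqrtd R) * lucasU R Q (c + 1) from rfl,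
      show lucasU R Q (c + 1 + 1) = Zsqrtd.sqrtd * lucasU R Q (c + 1)
      - (Q : Zsqrtd R) * lucasU R Q c from rfl]
    ring

lemma lucasU_det (n : ℕ) :
    lucasU R Q (n + 2) * lucasU R Q n - lucasU R Q (n + 1) ^ 2
      = -(Q : Zsqrtd R) ^ n := by
  induction n with
  | zero => simp [lucasU]
  | succ k ih =>
    have e1 : lucasU R Q (k + 3) = Zsqrtd.sqrtd * lucasU R Q (k + 2)
      - (Q : Zsqrtd R) * lucasU R Q (k + 1) := rfl
    have e2 : lucasU R Q (k + 2) = Zsqrtd.sqrtd * lucasU R Q (k + 1)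
      - (Q : Zsqrtd R) * lucasU R Q k := rfl
    have key : lucasU R Q (k + 3) * lucasU R Q (k + 1) - lucasU R Q (k + 2) ^ 2
        = (Q : Zsqrtd R) * (lucasU R Q (k + 2) * lucasU R Q k - lucasU R Q (k + 1) ^ 2) := by
      rw [e1, e2]; ring
    rw [show k + 1 + 2 = k + 3 from rfl, key, ih]
    ring

lemma lucasU_coprime (m : ℤ) (hmQ : IsCoprime m Q) (a : ℕ)
    (h : (m : Zsqrtd R) ∣ lucasU R Q (a + 1)) :
    IsCoprime (m : Zsqrtd R) (lucasU R Q (a + 2)) := by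
  have hq : IsCoprime (m : Zsqrtd R) ((Q : Zsqrtd R) ^ a) := by
    have h1 := hmQ.map (Int.castRingHom (Zsqrtd R))
    simpa using h1.pow_right
  obtain ⟨x, y, hxy⟩ := hq
  obtain ⟨w, hw⟩ := h
  refine ⟨x + y * ((m : Zsqrtd R) * w * w), -(y * lucasU R Q a), ?_⟩
  have hdet := lucasU_det R Q a
  have hQa : (Q : Zsqrtd R) ^ a = (m : Zsqrtd R) * ((m : Zsqrtd R) * w * w)
      - lucasU R Q a * lucasU R Q (a + 2) := by
    have hsq : lucasU R Q (a + 1) ^ 2 = (m : Zsqrtd R) * ((m : Zsqrtd R) * w * w) := by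
      rw [hw]; ring
    linear_combination hdet + hsq
  linear_combination hxy - y * hQa

lemma lucasU_dvd_add (m : ℤ) (a b : ℕ) (ha : (m : Zsqrtd R) ∣ lucasU R Q a)
    (hb : (m : Zsqrtd R) ∣ lucasU R Q b) : (m : Zsqrtd R) ∣ lucasU R Q (a + b) := by
  cases b with
  | zero => simpa using ha
  | succ c =>
    rw [show a + (c + 1) = a + c + 1 from rfl, lucasU_add_one]
    exact dvd_sub (Dvd.dvd.mul_left hb _) ((ha.mul_left _).mul_right _)

lemma lucasU_dvd_mul (m : ℤ) (a k : ℕ) (ha : (m : Zsqrtd R) ∣ lucasU R Q a) :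
    (m : Zsqrtd R) ∣ lucasU R Q (k * a) := by
  induction k with
  | zero => simp [lucasU]
  | succ j ih =>
    rw [show (j + 1) * a = j * a + a by ring]
    exact lucasU_dvd_add R Q m _ _ ih ha

lemma lucasU_dvd_sub (m : ℤ) (hmQ : IsCoprime m Q) (a b : ℕ)
    (ha : (m : Zsqrtd R) ∣ lucasU R Q (a + 1))
    (hab : (m : Zsqrtd R) ∣ lucasU R Q (a + 1 + b)) : (m : Zsqrtd R) ∣ lucasU R Q b := by
  cases b with
  | zero => simp [lucasU]
  | succ c =>
    rw [show a + 1 + (c + 1) = (a + 1) + c + 1 from rfl, lucasU_add_one] at hab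
    have h3 : (m : Zsqrtd R) ∣ (Q : Zsqrtd R) * lucasU R Q (a + 1) * lucasU R Q c :=
      (ha.mul_left ((Q : Zsqrtd R))).mul_right (lucasU R Q c)
    have h2 : (m : Zsqrtd R) ∣ lucasU R Q (a + 1 + 1) * lucasU R Q (c + 1) := by
      have h4 := dvd_add hab h3
      simpa using h4
    exact (lucasU_coprime R Q m hmQ a ha).dvd_of_dvd_mul_left h2

lemma lucasU_parity : ∀ n : ℕ,
    (Even n → (lucasU R Q n).re = 0) ∧ (¬ Even n → (lucasU R Q n).im = 0) := by
  intro n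
  induction n using Nat.twoStepInduction with
  | zero => simp [lucasU]
  | one => simp [lucasU]
  | more k ih1 ih2 =>
    have e : lucasU R Q (k + 2) = Zsqrtd.sqrtd * lucasU R Q (k + 1)
      - (Q : Zsqrtd R) * lucasU R Q k := rfl
    constructor
    · intro hev
      have hk : Even k := by simpa [Nat.even_add] using hev
      have h1 : ¬ Even (k + 1) := by simp [Nat.even_add_one, hk]
      simp [e, Zsqrtd.re_mul, Zsqrtd.re_sub, ih2.2 h1, ih1.1 hk]
    · intro hod
      have hk : ¬ Even k := by simpa [Nat.even_add] using hod
      have h1 : Even (k + 1) := by simp [Nat.even_add_one, hk]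
      simp [e, Zsqrtd.im_mul, Zsqrtd.im_sub, ih2.1 h1, ih1.2 hk]

lemma ubar_dvd_iff (m : ℤ) (k : ℕ) :
    m ∣ Ubar R Q k ↔ (m : Zsqrtd R) ∣ lucasU R Q k := by
  rw [Zsqrtd.intCast_dvd]
  unfold Ubar
  by_cases h : Even k
  · simp [h, (lucasU_parity R Q k).1 h]
  · simp [h, (lucasU_parity R Q k).2 h]

end aux

theorem rank_of_apparition_dvd (R Q : ℤ) (hRQ : IsCoprime R Q) (m : ℤ)
    (hmQ : IsCoprime m Q) (n : ℕ) (hn : 1 ≤ n) (hdvd : m ∣ Ubar R Q n) :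
    ∃ ω : ℕ, IsLeast {k : ℕ | 0 < k ∧ m ∣ Ubar R Q k} ω ∧ ω ∣ n := by
  have hex : ∃ k : ℕ, 0 < k ∧ m ∣ Ubar R Q k := ⟨n, hn, hdvd⟩
  classical
  set ω := Nat.find hex with hω
  have hspec := Nat.find_spec hex
  have hωpos : 0 < ω := hspec.1
  have hωdvd : (m : Zsqrtd R) ∣ lucasU R Q ω := (ubar_dvd_iff R Q m ω).1 hspec.2
  refine ⟨ω, ⟨hspec, fun b hb => Nat.find_min' hex hb⟩, ?_⟩
  have hndvd : (m : Zsqrtd R) ∣ lucasU R Q n := (ubar_dvd_iff R Q m n).1 hdvd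
  set q := n / ω with hq
  set M := q * ω with hMdef
  have hM : M + n % ω = n := Nat.div_add_mod' n ω
  have hr : (m : Zsqrtd R) ∣ lucasU R Q (n % ω) := by
    rcases Nat.eq_zero_or_pos q with hq0 | hq0
    · have hM0 : M = 0 := by rw [hMdef, hq0, Nat.zero_mul]
      have hnn : n % ω = n := by omega
      rwa [hnn]
    · have hmul : (m : Zsqrtd R) ∣ lucasU R Q M := lucasU_dvd_mul R Q m ω q hωdvd
      have hone : 1 ≤ M := Nat.mul_pos hq0 hωpos
      have heq : M = M - 1 + 1 := by omega
      have hn' : n = (M - 1 + 1) + n % ω := by omega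
      rw [heq] at hmul
      rw [hn'] at hndvd
      exact lucasU_dvd_sub R Q m hmQ _ _ hmul hndvd
  have hr0 : n % ω = 0 := by
    by_contra h
    have hrpos : 0 < n % ω := Nat.pos_of_ne_zero h
    have hle : ω ≤ n % ω := Nat.find_min' hex ⟨hrpos, (ubar_dvd_iff R Q m _).2 hr⟩
    have hlt := Nat.mod_lt n hωpos
    omega
  exact Nat.dvd_of_mod_eq_zero hr0
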